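/- arXiv:math/0203193 — 2 statements merged into one kernel-verified Lean document; each statement's English description precedes it below -/
import Mathlib

section
/- Let M be a von Neumann algebra acting on a complex Hilbert space H, let T ∈ M' be an element of its commutant, and let (a_{ij}), 1 ≤ i,j ≤ n, be operators in M such that ∑_{i,j} ⟨k_i, a_{ij} k_j⟩ ≥ 0 for all k_1,…,k_n ∈ H (i.e. the matrix (a_{ij}) is positive on H^n). Then for all h_1,…,h_n ∈ H, ∑_{i,j} ⟨T h_i, a_{ij} T h_j⟩ ≤ ‖T‖² ∑_{i,j} ⟨h_i, a_{ij} h_j⟩. In particular, if P : M → M is completely positive and S_1,…,S_n ∈ M, then ∑_{i,j} ⟨T h_i, P(S_i* S_j) T h_j⟩ ≤ ‖T‖² ∑_{i,j} ⟨h_i, P(S_i* S_j) h_j⟩. -/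
open scoped ComplexOrder
open ContinuousLinearMap

noncomputable section

/-- Positivity of an `n × n` operator matrix `(a i j)`, regarded as an operator on the
`n`-fold direct sum `Hⁿ`: `∑ᵢⱼ ⟨kᵢ, a i j kⱼ⟩ ≥ 0` for all `k₁, …, kₙ ∈ H`. -/
def PosOpMatrix {H : Type*} [NormedAddCommGroup H] [InnerProductSpace ℂ H] {n : ℕ}
    (a : Fin n → Fin n → (H →L[ℂ] H)) : Prop :=
  ∀ k : Fin n → H, 0 ≤ ∑ i, ∑ j, (inner ℂ (k i) (a i j (k j)) : ℂ)

/-- Complete positivity of a map relative to a von Neumann algebra `M`: positive operator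
matrices with entries in `M` are sent to positive operator matrices. -/
def IsCPOn {H : Type*} [NormedAddCommGroup H] [InnerProductSpace ℂ H] [CompleteSpace H]
    (M : VonNeumannAlgebra H) (P : (H →L[ℂ] H) → (H →L[ℂ] H)) : Prop :=
  ∀ (n : ℕ) (a : Fin n → Fin n → (H →L[ℂ] H)),
    (∀ i j, a i j ∈ M) → PosOpMatrix a → PosOpMatrix fun i j => P (a i j)

/-- Weak-operator continuity of a map on bounded subsets of `s`; for bounded linear maps on
von Neumann algebras this captures normality (σ-weak continuity). -/
def WOTContinuousOnBalls {H K : Type*} [NormedAddCommGroup H] [InnerProductSpace ℂ H]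
    [NormedAddCommGroup K] [InnerProductSpace ℂ K]
    (s : Set (H →L[ℂ] H)) (f : (H →L[ℂ] H) → (K →L[ℂ] K)) : Prop :=
  ∀ r : ℝ, ContinuousOn
    (fun T : H →WOT[ℂ] H =>
      ContinuousLinearMapWOT.ofCLM (f (ContinuousLinearMapWOT.toCLM T)))
    (ContinuousLinearMapWOT.ofCLM '' (s ∩ Metric.closedBall 0 r))

/-- The closure of a set of operators in the weak operator topology. -/
def WOTClosure {H K : Type*} [NormedAddCommGroup H] [InnerProductSpace ℂ H]
    [NormedAddCommGroup K] [InnerProductSpace ℂ K] (s : Set (H →L[ℂ] K)) : Set (H →L[ℂ] K) :=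
  ContinuousLinearMapWOT.ofCLM ⁻¹' closure (ContinuousLinearMapWOT.ofCLM '' s)

/-- A unital normal `*`-representation of (the elements of) a von Neumann algebra `M` on a
Hilbert space `K`, encoded as a function on all of `B(H)` whose properties are imposed only on
members of `M`. -/
structure IsNormalRepOn {H K : Type*} [NormedAddCommGroup H] [InnerProductSpace ℂ H]
    [CompleteSpace H] [NormedAddCommGroup K] [InnerProductSpace ℂ K] [CompleteSpace K]
    (M : VonNeumannAlgebra H) (π : (H →L[ℂ] H) → (K →L[ℂ] K)) : Prop where
  map_add : ∀ S ∈ M, ∀ T ∈ M, π (S + T) = π S + π T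
  map_smul : ∀ (c : ℂ), ∀ T ∈ M, π (c • T) = c • π T
  map_mul : ∀ S ∈ M, ∀ T ∈ M, π (S * T) = π S * π T
  map_star : ∀ T ∈ M, π (star T) = star (π T)
  map_one : π 1 = 1
  normal : WOTContinuousOnBalls (M : Set (H →L[ℂ] H)) π

/-- A completely positive linear map of a von Neumann algebra `M` into itself. -/
structure IsCPMapOn {H : Type*} [NormedAddCommGroup H] [InnerProductSpace ℂ H] [CompleteSpace H]
    (M : VonNeumannAlgebra H) (P : (H →L[ℂ] H) → (H →L[ℂ] H)) : Prop where
  map_mem : ∀ T ∈ M, P T ∈ M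
  map_add : ∀ S ∈ M, ∀ T ∈ M, P (S + T) = P S + P T
  map_smul : ∀ (c : ℂ), ∀ T ∈ M, P (c • T) = c • P T
  cp : IsCPOn M P

/-- A normal, unital, completely positive map on a von Neumann algebra `M`. -/
structure IsUNCPMapOn {H : Type*} [NormedAddCommGroup H] [InnerProductSpace ℂ H] [CompleteSpace H]
    (M : VonNeumannAlgebra H) (P : (H →L[ℂ] H) → (H →L[ℂ] H))
    extends IsCPMapOn M P : Prop where
  map_one : P 1 = 1
  normal : WOTContinuousOnBalls (M : Set (H →L[ℂ] H)) P

/-- A Stinespring triple `(π, K, W)` for `P`: `π` is a unital normal `*`-representation of `M`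
on `K`, `W : H → K` is an isometry, and `P T = W* (π T) W` for `T ∈ M`. -/
structure IsStinespring {H K : Type*} [NormedAddCommGroup H] [InnerProductSpace ℂ H]
    [CompleteSpace H] [NormedAddCommGroup K] [InnerProductSpace ℂ K] [CompleteSpace K]
    (M : VonNeumannAlgebra H) (P : (H →L[ℂ] H) → (H →L[ℂ] H))
    (π : (H →L[ℂ] H) → (K →L[ℂ] K)) (W : H →L[ℂ] K) : Prop where
  rep : IsNormalRepOn M π
  isometry : ∀ h : H, ‖W h‖ = ‖h‖
  dilation : ∀ T ∈ M, P T = ContinuousLinearMap.adjoint W ∘L (π T ∘L W)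

/-- A minimal Stinespring triple: additionally `{π(T) W h}` has dense span in `K`. -/
structure IsMinimalStinespring {H K : Type*} [NormedAddCommGroup H] [InnerProductSpace ℂ H]
    [CompleteSpace H] [NormedAddCommGroup K] [InnerProductSpace ℂ K] [CompleteSpace K]
    (M : VonNeumannAlgebra H) (P : (H →L[ℂ] H) → (H →L[ℂ] H))
    (π : (H →L[ℂ] H) → (K →L[ℂ] K)) (W : H →L[ℂ] K)
    extends IsStinespring M P π W : Prop where
  minimal :
    (Submodule.span ℂ {k : K | ∃ T ∈ M, ∃ h : H, k = π T (W h)}).topologicalClosure = ⊤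

/-- The `P`-boundedness condition with constant `C` for an operator `Y ∈ B(H)`:
`‖∑ᵢ Sᵢ Y* hᵢ‖² ≤ C ∑ᵢⱼ ⟨hᵢ, P(Sᵢ* Sⱼ) hⱼ⟩` for all `Sᵢ ∈ M` and `hᵢ ∈ H`. -/
def PBound {H : Type*} [NormedAddCommGroup H] [InnerProductSpace ℂ H] [CompleteSpace H]
    (M : VonNeumannAlgebra H) (P : (H →L[ℂ] H) → (H →L[ℂ] H))
    (Y : H →L[ℂ] H) (C : ℝ) : Prop :=
  ∀ (n : ℕ) (S : Fin n → (H →L[ℂ] H)), (∀ i, S i ∈ M) → ∀ h : Fin n → H,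
    ((‖∑ i, S i (ContinuousLinearMap.adjoint Y (h i))‖ ^ 2 : ℝ) : ℂ) ≤
      (C : ℂ) * ∑ i, ∑ j, (inner ℂ (h i) (P (star (S i) * S j) (h j)) : ℂ)

/-- The Arveson correspondence of `P`: all `Y ∈ B(H)` satisfying the `P`-boundedness
condition with some nonnegative constant. -/
def ArvesonCorrespondence {H : Type*} [NormedAddCommGroup H] [InnerProductSpace ℂ H]
    [CompleteSpace H] (M : VonNeumannAlgebra H) (P : (H →L[ℂ] H) → (H →L[ℂ] H)) :
    Set (H →L[ℂ] H) :=
  {Y | ∃ C : ℝ, 0 ≤ C ∧ PBound M P Y C}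

/-- A cp-semigroup on `M`: a semigroup `{P_t}_{t ≥ 0}` of unital, normal, completely positive
maps on `M` with `P_0 = id`. -/
structure IsCpSemigroup {H : Type*} [NormedAddCommGroup H] [InnerProductSpace ℂ H]
    [CompleteSpace H] (M : VonNeumannAlgebra H)
    (P : ℝ → (H →L[ℂ] H) → (H →L[ℂ] H)) : Prop where
  uncp : ∀ t : ℝ, 0 ≤ t → IsUNCPMapOn M (P t)
  id_zero : ∀ T ∈ M, P 0 T = T
  comp : ∀ s t : ℝ, 0 ≤ s → 0 ≤ t → ∀ T ∈ M, P (t + s) T = P t (P s T)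

/-- Weak continuity of a cp-semigroup: `t ↦ ⟨P_t(a) h, k⟩` is continuous on `[0, ∞)`. -/
def IsWeaklyContinuousSemigroup {H : Type*} [NormedAddCommGroup H] [InnerProductSpace ℂ H]
    [CompleteSpace H] (M : VonNeumannAlgebra H)
    (P : ℝ → (H →L[ℂ] H) → (H →L[ℂ] H)) : Prop :=
  ∀ T ∈ M, ∀ h k : H,
    ContinuousOn (fun t : ℝ => (inner ℂ ((P t T) h) k : ℂ)) (Set.Ici (0 : ℝ))

/-- A semigroup `{α_t}_{t ≥ 0}` of unital, normal `*`-endomorphisms of a von Neumann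
algebra `R`, with `α_0 = id`. -/
structure IsEndoSemigroup {K : Type*} [NormedAddCommGroup K] [InnerProductSpace ℂ K]
    [CompleteSpace K] (R : VonNeumannAlgebra K)
    (α : ℝ → (K →L[ℂ] K) → (K →L[ℂ] K)) : Prop where
  rep : ∀ t : ℝ, 0 ≤ t → IsNormalRepOn R (α t)
  map_mem : ∀ t : ℝ, 0 ≤ t → ∀ S ∈ R, α t S ∈ R
  id_zero : ∀ S ∈ R, α 0 S = S
  comp : ∀ s t : ℝ, 0 ≤ s → 0 ≤ t → ∀ S ∈ R, α (t + s) S = α t (α s S)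

set_option maxHeartbeats 1000000
set_option synthInstance.maxHeartbeats 400000

instance PiLp.instCompleteSpace' {ι : Type*} (p : ENNReal) (α : ι → Type*)
    [∀ i, UniformSpace (α i)] [∀ i, CompleteSpace (α i)] : CompleteSpace (PiLp p α) :=
  inferInstance


/-- Elements commuting with `b` and `star b`, as a closed star subalgebra. -/
def commStarSub {A : Type*} [CStarAlgebra A] (b : A) : StarSubalgebra ℂ A where
  carrier := {x | Commute b x ∧ Commute (star b) x}
  mul_mem' := fun hx hy => ⟨hx.1.mul_right hy.1, hx.2.mul_right hy.2⟩
  one_mem' := ⟨Commute.one_right _, Commute.one_right _⟩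
  add_mem' := fun hx hy => ⟨hx.1.add_right hy.1, hx.2.add_right hy.2⟩
  algebraMap_mem' := fun c => ⟨(Algebra.commutes c b).symm, (Algebra.commutes c (star b)).symm⟩
  star_mem' := fun {x} hx => ⟨by simpa using hx.2.star_star, by simpa using hx.1.star_star⟩

lemma isClosed_commStarSub {A : Type*} [CStarAlgebra A] (b : A) :
    IsClosed ((commStarSub b : StarSubalgebra ℂ A) : Set A) := by
  have : ((commStarSub b : StarSubalgebra ℂ A) : Set A) =
      {x | b * x = x * b} ∩ {x | star b * x = x * star b} := rfl
  rw [this]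
  exact ((isClosed_eq (by fun_prop) (by fun_prop)).inter (isClosed_eq (by fun_prop) (by fun_prop)))

lemma commute_cfc_of_commute {A : Type*} [CStarAlgebra A] {a b : A} (ha : IsStarNormal a)
    (h1 : Commute b a) (h2 : Commute b (star a)) (f : ℂ → ℂ) : Commute b (cfc f a) := by
  by_cases hf : ContinuousOn f (spectrum ℂ a)
  · have : cfc f a ∈ StarAlgebra.elemental ℂ a := by
      rw [cfc_apply f a ha hf, cfcHom_eq_of_isStarNormal]
      exact Subtype.coe_prop _
    have hle : StarAlgebra.elemental ℂ a ≤ commStarSub b :=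
      StarAlgebra.elemental.le_of_mem (isClosed_commStarSub b)
        ⟨h1, by simpa using h2.star_star⟩
    exact (hle this).1
  · rw [cfc_apply_of_not_continuousOn a hf]
    exact Commute.zero_right _

lemma commute_sqrt_of_commute {A : Type*} [CStarAlgebra A] [PartialOrder A] [StarOrderedRing A]
    {a b : A} (ha : 0 ≤ a) (h : Commute b a) : Commute b (CFC.sqrt a) := by
  have hsa : IsSelfAdjoint a := .of_nonneg ha
  have h1 : CFC.sqrt a = cfcₙ (fun x : ℝ => (NNReal.sqrt x.toNNReal : ℝ)) a :=
    cfcₙ_nnreal_eq_real _ _ ha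
  have hcont : ContinuousOn (fun x : ℝ => (NNReal.sqrt x.toNNReal : ℝ)) (spectrum ℝ a) :=
    Continuous.continuousOn (NNReal.continuous_coe.comp (NNReal.sqrt.continuous.comp continuous_real_toNNReal))
  have hcont' : ContinuousOn (fun x : ℝ => (NNReal.sqrt x.toNNReal : ℝ))
      (quasispectrum ℝ a) := Continuous.continuousOn (NNReal.continuous_coe.comp (NNReal.sqrt.continuous.comp continuous_real_toNNReal))
  rw [h1, cfcₙ_eq_cfc hcont' (by simp), cfc_real_eq_complex _ hsa]
  exact commute_cfc_of_commute hsa.isStarNormal h (by rwa [hsa.star_eq]) _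

set_option maxHeartbeats 1000000
set_option synthInstance.maxHeartbeats 400000


lemma abstract_key' {E : Type*} [NormedAddCommGroup E] [InnerProductSpace ℂ E] [CompleteSpace E]
    (A D : E →L[ℂ] E) (hA : (0 : E →L[ℂ] E) ≤ A) (hDA : Commute D A)
    (c : ℝ) (hc : 0 ≤ c) (hD : ∀ x : E, ‖D x‖ ≤ c * ‖x‖) (x : E) :
    (inner ℂ (D x) (A (D x)) : ℂ) ≤ ((c ^ 2 : ℝ) : ℂ) * (inner ℂ x (A x) : ℂ) := by
  set Q : E →L[ℂ] E := CFC.sqrt A with hQdef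
  have hQ0 : (0 : E →L[ℂ] E) ≤ Q := CFC.sqrt_nonneg A
  have hQQ : Q * Q = A := CFC.sqrt_mul_sqrt_self A hA
  have hQsa : IsSelfAdjoint Q := .of_nonneg hQ0
  have hDQ : Commute D Q := commute_sqrt_of_commute hA hDA
  have hQadj : ContinuousLinearMap.adjoint Q = Q := hQsa.adjoint_eq
  have key : ∀ y : E, (inner ℂ y (A y) : ℂ) = ((‖Q y‖ ^ 2 : ℝ) : ℂ) := by
    intro y
    rw [← hQQ]
    calc (inner ℂ y ((Q * Q) y) : ℂ) = (inner ℂ y (Q (Q y)) : ℂ) := rfl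
      _ = (inner ℂ (ContinuousLinearMap.adjoint Q y) (Q y) : ℂ) := by
          rw [ContinuousLinearMap.adjoint_inner_left]
      _ = (inner ℂ (Q y) (Q y) : ℂ) := by rw [hQadj]
      _ = ((‖Q y‖ ^ 2 : ℝ) : ℂ) := by
          rw [inner_self_eq_norm_sq_to_K]; norm_num
  rw [key, key]
  have hswap : Q (D x) = D (Q x) := by
    calc Q (D x) = (Q * D) x := rfl
      _ = (D * Q) x := by rw [hDQ]
      _ = D (Q x) := rfl
  have hle : ‖Q (D x)‖ ^ 2 ≤ c ^ 2 * ‖Q x‖ ^ 2 := by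
    rw [hswap, ← mul_pow]
    exact pow_le_pow_left₀ (norm_nonneg _) (hD (Q x)) 2
  calc ((‖Q (D x)‖ ^ 2 : ℝ) : ℂ) ≤ ((c ^ 2 * ‖Q x‖ ^ 2 : ℝ) : ℂ) := by
        exact_mod_cast hle
    _ = ((c ^ 2 : ℝ) : ℂ) * ((‖Q x‖ ^ 2 : ℝ) : ℂ) := by push_cast; ring


lemma part1 {H : Type*} [NormedAddCommGroup H] [InnerProductSpace ℂ H]
    [CompleteSpace H] (M : VonNeumannAlgebra H) (T : H →L[ℂ] H) (hT : T ∈ M.commutant)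
    {n : ℕ} (a : Fin n → Fin n → (H →L[ℂ] H)) (haM : ∀ i j, a i j ∈ M)
    (hpos : ∀ k : Fin n → H, 0 ≤ ∑ i, ∑ j, (inner ℂ (k i) (a i j (k j)) : ℂ))
    (h : Fin n → H) :
    ∑ i, ∑ j, (inner ℂ (T (h i)) (a i j (T (h j))) : ℂ) ≤
      ((‖T‖ ^ 2 : ℝ) : ℂ) * ∑ i, ∑ j, (inner ℂ (h i) (a i j (h j)) : ℂ) := by
  classical
  let e : PiLp 2 (fun _ : Fin n => H) ≃L[ℂ] (Fin n → H) :=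
    PiLp.continuousLinearEquiv 2 ℂ (fun _ : Fin n => H)
  let A : PiLp 2 (fun _ : Fin n => H) →L[ℂ] PiLp 2 (fun _ : Fin n => H) :=
    (e.symm : (Fin n → H) →L[ℂ] PiLp 2 (fun _ : Fin n => H)) ∘L
      ((ContinuousLinearMap.pi fun i => ∑ j, (a i j) ∘L (ContinuousLinearMap.proj j)) ∘L
        (e : PiLp 2 (fun _ : Fin n => H) →L[ℂ] (Fin n → H)))
  let D : PiLp 2 (fun _ : Fin n => H) →L[ℂ] PiLp 2 (fun _ : Fin n => H) :=
    (e.symm : (Fin n → H) →L[ℂ] PiLp 2 (fun _ : Fin n => H)) ∘L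
      ((ContinuousLinearMap.pi fun i => T ∘L (ContinuousLinearMap.proj i)) ∘L
        (e : PiLp 2 (fun _ : Fin n => H) →L[ℂ] (Fin n → H)))
  have hA : ∀ (k : PiLp 2 (fun _ : Fin n => H)) (i : Fin n), A k i = ∑ j, a i j (k j) := by
    intro k i
    show (ContinuousLinearMap.pi fun i => ∑ j, (a i j) ∘L (ContinuousLinearMap.proj j)) k i
      = ∑ j, a i j (k j)
    simp [ContinuousLinearMap.sum_apply]
  have hD : ∀ (k : PiLp 2 (fun _ : Fin n => H)) (i : Fin n), D k i = T (k i) := fun k i => rfl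
  have hAin : ∀ k : PiLp 2 (fun _ : Fin n => H),
      (inner ℂ k (A k) : ℂ) = ∑ i, ∑ j, (inner ℂ (k i) (a i j (k j)) : ℂ) := by
    intro k
    rw [PiLp.inner_apply]
    refine Finset.sum_congr rfl fun i _ => ?_
    rw [hA, inner_sum]
  have hApos : (0 : PiLp 2 (fun _ : Fin n => H) →L[ℂ] _) ≤ A := by
    rw [ContinuousLinearMap.nonneg_iff_isPositive, ContinuousLinearMap.isPositive_iff_complex]
    intro x
    have h0 : 0 ≤ (inner ℂ x (A x) : ℂ) := by rw [hAin]; exact hpos x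
    rw [Complex.nonneg_iff] at h0
    have hAx : (inner ℂ (A x) x : ℂ) = Complex.ofReal ((inner ℂ x (A x) : ℂ).re) := by
      rw [← inner_conj_symm]
      apply Complex.ext
      · simp only [Complex.conj_re, Complex.ofReal_re]
      · simp only [Complex.conj_im, Complex.ofReal_im, ← h0.2, neg_zero]
    refine ⟨?_, ?_⟩
    · rw [hAx]; simp
    · rw [hAx]; simpa using h0.1
  have hcomm : ∀ i j, ∀ x : H, T (a i j x) = a i j (T x) := by
    intro i j x
    have h1 := (VonNeumannAlgebra.mem_commutant_iff.mp hT) (a i j) (haM i j)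
    calc T (a i j x) = (T * a i j) x := rfl
      _ = (a i j * T) x := by rw [h1]
      _ = a i j (T x) := rfl
  have hDA : Commute D A := by
    refine ContinuousLinearMap.ext fun k => ?_
    show D (A k) = A (D k)
    refine PiLp.ext fun i => ?_
    show D (A k) i = A (D k) i
    rw [hD, hA, hA, map_sum]
    exact Finset.sum_congr rfl fun j _ => by rw [hD, hcomm]
  have hDnorm : ∀ k : PiLp 2 (fun _ : Fin n => H), ‖D k‖ ≤ ‖T‖ * ‖k‖ := by
    intro k
    have h2 : ‖D k‖ ^ 2 ≤ (‖T‖ * ‖k‖) ^ 2 := by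
      rw [PiLp.norm_sq_eq_of_L2, mul_pow, PiLp.norm_sq_eq_of_L2, Finset.mul_sum]
      refine Finset.sum_le_sum fun i _ => ?_
      rw [hD, ← mul_pow]
      exact pow_le_pow_left₀ (norm_nonneg _) (T.le_opNorm (k i)) 2
    have := pow_le_pow_iff_left₀ (norm_nonneg (D k))
      (mul_nonneg (norm_nonneg T) (norm_nonneg k)) (two_ne_zero)
    exact this.mp h2
  have main := abstract_key' A D hApos hDA ‖T‖ (norm_nonneg T) hDnorm
    ((e.symm : (Fin n → H) →L[ℂ] PiLp 2 (fun _ : Fin n => H)) h)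
  have l1 : (inner ℂ (D (e.symm h)) (A (D (e.symm h))) : ℂ)
      = ∑ i, ∑ j, (inner ℂ (T (h i)) (a i j (T (h j))) : ℂ) := by
    rw [hAin]; rfl
  have l2 : (inner ℂ ((e.symm : (Fin n → H) →L[ℂ] PiLp 2 (fun _ : Fin n => H)) h)
      (A ((e.symm : (Fin n → H) →L[ℂ] PiLp 2 (fun _ : Fin n => H)) h)) : ℂ)
      = ∑ i, ∑ j, (inner ℂ (h i) (a i j (h j)) : ℂ) := by
    rw [hAin]; rfl
  rw [← l1, ← l2]
  exact main

/-- for `T` in the commutant of `M` and a positive operator matrix `(a i j)`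
with entries in `M`, `∑ᵢⱼ ⟨T hᵢ, a i j (T hⱼ)⟩ ≤ ‖T‖² ∑ᵢⱼ ⟨hᵢ, a i j hⱼ⟩`; in particular this
holds for the matrices `(P (Sᵢ* Sⱼ))` arising from a completely positive map `P`. -/
theorem commutant_compression_le {H : Type*} [NormedAddCommGroup H] [InnerProductSpace ℂ H]
    [CompleteSpace H] (M : VonNeumannAlgebra H) (T : H →L[ℂ] H) (hT : T ∈ M.commutant) :
    (∀ (n : ℕ) (a : Fin n → Fin n → (H →L[ℂ] H)), (∀ i j, a i j ∈ M) → PosOpMatrix a →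
      ∀ h : Fin n → H,
        ∑ i, ∑ j, (inner ℂ (T (h i)) (a i j (T (h j))) : ℂ) ≤
          ((‖T‖ ^ 2 : ℝ) : ℂ) * ∑ i, ∑ j, (inner ℂ (h i) (a i j (h j)) : ℂ)) ∧
    (∀ P : (H →L[ℂ] H) → (H →L[ℂ] H), IsCPMapOn M P →
      ∀ (n : ℕ) (S : Fin n → (H →L[ℂ] H)), (∀ i, S i ∈ M) → ∀ h : Fin n → H,
        ∑ i, ∑ j, (inner ℂ (T (h i)) (P (star (S i) * S j) (T (h j))) : ℂ) ≤
          ((‖T‖ ^ 2 : ℝ) : ℂ) * ∑ i, ∑ j, (inner ℂ (h i) (P (star (S i) * S j) (h j)) : ℂ)) := by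
  constructor
  · intro n a haM hpos h
    exact part1 M T hT a haM hpos h
  · intro P hP n S hS h
    refine part1 M T hT _ (fun i j => hP.map_mem _ (mul_mem (star_mem (hS i)) (hS j))) ?_ h
    refine hP.cp n (fun i j => star (S i) * S j)
      (fun i j => mul_mem (star_mem (hS i)) (hS j)) ?_
    intro k
    have key : ∀ i j, (inner ℂ (k i) ((star (S i) * S j) (k j)) : ℂ)
        = (inner ℂ (S i (k i)) (S j (k j)) : ℂ) := by
      intro i j
      have : (star (S i) * S j) (k j) = ContinuousLinearMap.adjoint (S i) (S j (k j)) := rfl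
      rw [this, ContinuousLinearMap.adjoint_inner_right]
    calc (0 : ℂ) ≤ (inner ℂ (∑ i, S i (k i)) (∑ j, S j (k j)) : ℂ) := by
          rw [inner_self_eq_norm_sq_to_K]
          norm_cast
          exact Complex.zero_le_real.mpr (sq_nonneg _)
      _ = ∑ i, ∑ j, (inner ℂ (k i) ((star (S i) * S j) (k j)) : ℂ) := by
          rw [sum_inner]
          exact Finset.sum_congr rfl fun i _ => by
            rw [inner_sum]
            exact Finset.sum_congr rfl fun j _ => (key i j).symm
end
end

section
/- Let M be a von Neumann algebra acting on a complex Hilbert space H, let P : M → M be a completely positive linear map, and let Y ∈ B(H) satisfy the P-boundedness condition with constant C ≥ 0. Then for every n ≥ 1, every n×n matrix (a_{ij}) of operators in M that is positive as an operator on H^n, and all h_1,…,h_n ∈ H, one has ∑_{i,j} ⟨Y* h_i, a_{ij} Y* h_j⟩ ≤ C ∑_{i,j} ⟨h_i, P(a_{ij}) h_j⟩. -/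
open scoped ComplexOrder
open ContinuousLinearMap

set_option linter.unusedSectionVars false
set_option synthInstance.maxHeartbeats 1000000
set_option maxHeartbeats 1000000

noncomputable section

section PBoundAuxSec
set_option linter.unusedSectionVars false
set_option synthInstance.maxHeartbeats 1000000
set_option maxHeartbeats 1000000

namespace PBoundAux

variable {H : Type*} [NormedAddCommGroup H] [InnerProductSpace ℂ H] [CompleteSpace H] {n : ℕ}

abbrev E (H : Type*) [NormedAddCommGroup H] [InnerProductSpace ℂ H] (n : ℕ) :=
  PiLp 2 (fun _ : Fin n => H)

instance : CompleteSpace (E H n) := inferInstance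

def sgl (j : Fin n) : H →L[ℂ] E H n :=
  ((PiLp.continuousLinearEquiv 2 ℂ (fun _ : Fin n => H)).symm : (Fin n → H) →L[ℂ] E H n) ∘L
    ContinuousLinearMap.pi (fun i => if i = j then ContinuousLinearMap.id ℂ H else 0)

def prj (i : Fin n) : E H n →L[ℂ] H :=
  (ContinuousLinearMap.proj i) ∘L
    ((PiLp.continuousLinearEquiv 2 ℂ (fun _ : Fin n => H)) : E H n →L[ℂ] (Fin n → H))

@[simp] lemma sgl_apply (j : Fin n) (h : H) (i : Fin n) :
    sgl j h i = if i = j then h else 0 := by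
  simp [sgl, ContinuousLinearMap.pi_apply]
  split <;> rfl

@[simp] lemma prj_apply (i : Fin n) (x : E H n) : prj i x = x i := rfl

lemma inner_sgl_right (j : Fin n) (h : H) (x : E H n) :
    (inner ℂ x (sgl j h) : ℂ) = inner ℂ (x j) h := by
  simp [PiLp.inner_apply, apply_ite (inner ℂ _), Finset.sum_ite_eq]

lemma inner_sgl_left (j : Fin n) (h : H) (x : E H n) :
    (inner ℂ (sgl j h) x : ℂ) = inner ℂ h (x j) := by
  simp [PiLp.inner_apply, apply_ite (fun y => (inner ℂ y (x _))), Finset.sum_ite_eq]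

lemma decomp (x : E H n) : ∑ j, sgl j (x j) = x := by
  ext i
  have : (∑ j, sgl j (x j)) i = ∑ j, sgl j (x j) i :=
    by rw [WithLp.ofLp_sum]; exact Finset.sum_apply i Finset.univ _
  simp [this, Finset.sum_ite_eq]

def blk (a : Fin n → Fin n → (H →L[ℂ] H)) : E H n →L[ℂ] E H n :=
  ∑ i, ∑ j, sgl i ∘L a i j ∘L prj j

lemma Esum_apply {ι : Type*} (s : Finset ι) (f : ι → E H n) (i : Fin n) :
    (∑ k ∈ s, f k) i = ∑ k ∈ s, f k i := by
  classical
  induction s using Finset.induction with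
  | empty => rfl
  | insert _ _ hk ih => rw [Finset.sum_insert hk, Finset.sum_insert hk, ← ih]; rfl

lemma blk_apply (a : Fin n → Fin n → (H →L[ℂ] H)) (x : E H n) (i : Fin n) :
    blk a x i = ∑ j, a i j (x j) := by
  have : blk a x i = ∑ i', ∑ j, (sgl i' ∘L a i' j ∘L prj j) x i := by
    simp only [blk, ContinuousLinearMap.sum_apply]
    rw [Esum_apply]
    exact Finset.sum_congr rfl fun i' _ => Esum_apply _ _ _
  rw [this]
  simp [Finset.sum_ite_eq']

lemma inner_blk (a : Fin n → Fin n → (H →L[ℂ] H)) (x y : E H n) :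
    (inner ℂ x (blk a y) : ℂ) = ∑ i, ∑ j, (inner ℂ (x i) (a i j (y j)) : ℂ) := by
  simp [PiLp.inner_apply, blk_apply, inner_sum]

def entCLM (i j : Fin n) : (E H n →L[ℂ] E H n) →L[ℂ] (H →L[ℂ] H) :=
  (ContinuousLinearMap.compL ℂ H (E H n) H (prj i)) ∘L
    ((ContinuousLinearMap.compL ℂ H (E H n) (E H n)).flip (sgl j))

def ent (T : E H n →L[ℂ] E H n) (i j : Fin n) : H →L[ℂ] H := entCLM i j T

@[simp] lemma ent_apply (T : E H n →L[ℂ] E H n) (i j : Fin n) (h : H) :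
    ent T i j h = T (sgl j h) i := rfl

lemma ent_blk (a : Fin n → Fin n → (H →L[ℂ] H)) (i j : Fin n) :
    ent (blk a) i j = a i j := by
  ext h
  simp [blk_apply, apply_ite (a i _), Finset.sum_ite_eq']

lemma ent_one (i j : Fin n) :
    ent (1 : E H n →L[ℂ] E H n) i j = if i = j then 1 else 0 := by
  ext h
  simp only [ent_apply, ContinuousLinearMap.one_apply, sgl_apply]
  split <;> simp

lemma ent_algebraMap (c : ℂ) (i j : Fin n) :
    ent (algebraMap ℂ (E H n →L[ℂ] E H n) c) i j =
      if i = j then algebraMap ℂ (H →L[ℂ] H) c else 0 := by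
  have : algebraMap ℂ (E H n →L[ℂ] E H n) c = c • (1 : E H n →L[ℂ] E H n) :=
    Algebra.algebraMap_eq_smul_one c
  rw [this]
  have h2 : ent (c • (1 : E H n →L[ℂ] E H n)) i j = c • ent 1 i j := map_smul (entCLM i j) c 1
  rw [h2, ent_one]
  split <;> simp [Algebra.algebraMap_eq_smul_one]

lemma ent_mul (T U : E H n →L[ℂ] E H n) (i j : Fin n) :
    ent (T * U) i j = ∑ k, ent T i k * ent U k j := by
  ext h
  have : U (sgl j h) = ∑ k, sgl k (U (sgl j h) k) := (decomp _).symm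
  calc ent (T * U) i j h = T (U (sgl j h)) i := rfl
    _ = T (∑ k, sgl k (U (sgl j h) k)) i := by rw [← this]
    _ = ∑ k, T (sgl k (U (sgl j h) k)) i := by rw [map_sum]; exact Esum_apply _ _ _
    _ = ∑ k, (ent T i k * ent U k j) h := rfl
  rw [← ContinuousLinearMap.sum_apply]

lemma ent_star (T : E H n →L[ℂ] E H n) (i j : Fin n) :
    ent (star T) i j = star (ent T j i) := by
  ext h
  apply ext_inner_right ℂ
  intro g
  have h1 : (inner ℂ (ent (star T) i j h) g : ℂ) = inner ℂ (star T (sgl j h)) (sgl i g) := by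
    rw [inner_sgl_right]; rfl
  rw [h1, ContinuousLinearMap.star_eq_adjoint, ContinuousLinearMap.adjoint_inner_left,
    inner_sgl_left, ContinuousLinearMap.star_eq_adjoint, ContinuousLinearMap.adjoint_inner_left]
  rfl

end PBoundAux

namespace PBoundAux
variable {H : Type*} [NormedAddCommGroup H] [InnerProductSpace ℂ H] [CompleteSpace H] {n : ℕ}

lemma isClosed_centralizer (s : Set (H →L[ℂ] H)) : IsClosed (Set.centralizer s) := by
  have : Set.centralizer s = ⋂ m ∈ s, {T : H →L[ℂ] H | m * T = T * m} := by
    ext T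
    simp [Set.mem_centralizer_iff, Set.mem_iInter]
  rw [this]
  exact isClosed_biInter fun m _ =>
    isClosed_eq (continuous_mul_left m) (continuous_mul_right m)

lemma vN_isClosed (M : VonNeumannAlgebra H) : IsClosed (M : Set (H →L[ℂ] H)) := by
  rw [← M.centralizer_centralizer]
  exact isClosed_centralizer _

/-- the subalgebra of block operators with entries in `M` -/
def entSub (M : VonNeumannAlgebra H) (n : ℕ) : StarSubalgebra ℂ (E H n →L[ℂ] E H n) where
  carrier := {T | ∀ i j, ent T i j ∈ M}
  mul_mem' := by
    intro T U hT hU i j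
    rw [ent_mul]
    exact sum_mem fun k _ => mul_mem (hT i k) (hU k j)
  one_mem' := by
    intro i j
    rw [ent_one]
    split
    · exact one_mem M
    · exact zero_mem M
  add_mem' := by
    intro T U hT hU i j
    have : ent (T + U) i j = ent T i j + ent U i j := map_add (entCLM i j) T U
    rw [this]
    exact add_mem (hT i j) (hU i j)
  zero_mem' := by
    intro i j
    have : ent (0 : E H n →L[ℂ] E H n) i j = 0 := map_zero (entCLM i j)
    rw [this]
    exact zero_mem M
  algebraMap_mem' := by
    intro c i j
    rw [ent_algebraMap]
    split
    · exact algebraMap_mem M.toStarSubalgebra c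
    · exact zero_mem M
  star_mem' := by
    intro T hT i j
    rw [ent_star]
    exact star_mem (hT j i)

lemma mem_entSub {M : VonNeumannAlgebra H} {T : E H n →L[ℂ] E H n} :
    T ∈ entSub M n ↔ ∀ i j, ent T i j ∈ M := Iff.rfl

lemma isClosed_entSub (M : VonNeumannAlgebra H) :
    IsClosed ((entSub M n : StarSubalgebra ℂ (E H n →L[ℂ] E H n)) : Set (E H n →L[ℂ] E H n)) := by
  have : ((entSub M n : StarSubalgebra ℂ (E H n →L[ℂ] E H n)) : Set (E H n →L[ℂ] E H n)) =
      ⋂ i, ⋂ j, (entCLM i j) ⁻¹' (M : Set (H →L[ℂ] H)) := by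
    ext T
    simp only [Set.mem_iInter, Set.mem_preimage]
    rfl
  rw [this]
  exact isClosed_iInter fun i => isClosed_iInter fun j =>
    (vN_isClosed M).preimage (entCLM i j).continuous

end PBoundAux

namespace PBoundAux

lemma cfc_mem_elemental {A : Type*} [CStarAlgebra A] (a : A) (f : ℂ → ℂ) :
    cfc f a ∈ StarAlgebra.elemental ℂ a := by
  by_cases hh : IsStarNormal a ∧ ContinuousOn f (spectrum ℂ a)
  · have := hh.1
    rw [cfc_apply f a hh.1 hh.2, cfcHom_eq_of_isStarNormal]
    exact SetLike.coe_mem _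
  · rw [cfc_apply_of_not_and a hh]
    exact zero_mem _

variable {H : Type*} [NormedAddCommGroup H] [InnerProductSpace ℂ H] [CompleteSpace H] {n : ℕ}

lemma sqrt_mem_elemental (A : E H n →L[ℂ] E H n) (hA : 0 ≤ A) :
    CFC.sqrt A ∈ StarAlgebra.elemental ℂ A := by
  have hsa : IsSelfAdjoint A := IsSelfAdjoint.of_nonneg hA
  have hcont : Continuous fun z : ℂ => ((NNReal.sqrt z.re.toNNReal : ℝ) : ℂ) :=
    Complex.continuous_ofReal.comp (NNReal.continuous_coe.comp
      (NNReal.continuous_sqrt.comp (continuous_real_toNNReal.comp Complex.continuous_re)))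
  have h1 : CFC.sqrt A = cfcₙ (fun x : ℝ => (NNReal.sqrt x.toNNReal : ℝ)) A :=
    cfcₙ_nnreal_eq_real _ A hA
  have h2 : CFC.sqrt A = cfcₙ (fun z : ℂ => ((NNReal.sqrt z.re.toNNReal : ℝ) : ℂ)) A := by
    rw [h1]
    exact cfcₙ_real_eq_complex _ hsa
  have h3 : CFC.sqrt A = cfc (fun z : ℂ => ((NNReal.sqrt z.re.toNNReal : ℝ) : ℂ)) A := by
    rw [h2]
    exact cfcₙ_eq_cfc hcont.continuousOn (by simp)
  rw [h3]
  exact cfc_mem_elemental A _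

end PBoundAux

end PBoundAuxSec

/-- an operator `Y` satisfying the `P`-boundedness condition with constant `C`
satisfies the corresponding inequality for every positive operator matrix with entries
in `M`. -/
theorem pbound_posMatrix {H : Type*} [NormedAddCommGroup H] [InnerProductSpace ℂ H]
    [CompleteSpace H] (M : VonNeumannAlgebra H)
    (P : (H →L[ℂ] H) → (H →L[ℂ] H)) (hP : IsCPMapOn M P)
    (Y : H →L[ℂ] H) (C : ℝ) (hC : 0 ≤ C) (hY : PBound M P Y C) :
    ∀ n : ℕ, 1 ≤ n → ∀ a : Fin n → Fin n → (H →L[ℂ] H), (∀ i j, a i j ∈ M) →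
      PosOpMatrix a → ∀ h : Fin n → H,
      ∑ i, ∑ j, (inner ℂ (ContinuousLinearMap.adjoint Y (h i))
          (a i j (ContinuousLinearMap.adjoint Y (h j))) : ℂ) ≤
        (C : ℂ) * ∑ i, ∑ j, (inner ℂ (h i) (P (a i j) (h j)) : ℂ) := by

  intro n hn a haM hpos h
  classical
  set A : PBoundAux.E H n →L[ℂ] PBoundAux.E H n := PBoundAux.blk a with hAdef
  have key : ∀ x : PBoundAux.E H n, 0 ≤ (inner ℂ x (A x) : ℂ) := by
    intro x
    rw [hAdef, PBoundAux.inner_blk]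
    exact hpos x
  have hA : (0 : PBoundAux.E H n →L[ℂ] PBoundAux.E H n) ≤ A := by
    rw [ContinuousLinearMap.nonneg_iff_isPositive, ContinuousLinearMap.isPositive_iff_complex]
    intro x
    obtain ⟨hre, him⟩ := Complex.nonneg_iff.mp (key x)
    have him' : (inner ℂ x (A x) : ℂ).im = 0 := him.symm
    have hconj : (inner ℂ (A x) x : ℂ) = inner ℂ x (A x) := by
      rw [← inner_conj_symm]
      exact Complex.conj_eq_iff_im.mpr him'
    constructor
    · rw [hconj]
      apply Complex.ext
      · simp only [RCLike.re_to_complex, Complex.ofReal_re]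
      · simp only [RCLike.re_to_complex, Complex.ofReal_im]
        exact him'.symm
    · rw [hconj]
      simpa [RCLike.re_to_complex] using hre
  set B := CFC.sqrt A with hBdef
  have hBpos : (0 : PBoundAux.E H n →L[ℂ] PBoundAux.E H n) ≤ B := CFC.sqrt_nonneg A
  have hBsa : IsSelfAdjoint B := .of_nonneg hBpos
  have hBB : B * B = A := CFC.sqrt_mul_sqrt_self A hA
  have hBmem : ∀ i j, PBoundAux.ent B i j ∈ M := by
    have hAm : A ∈ PBoundAux.entSub M n := by
      intro i j
      rw [hAdef, PBoundAux.ent_blk]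
      exact haM i j
    exact StarAlgebra.elemental.le_of_mem (PBoundAux.isClosed_entSub M) hAm
      (PBoundAux.sqrt_mem_elemental A hA)
  have hBstar : ∀ i j, star (PBoundAux.ent B i j) = PBoundAux.ent B j i := by
    intro i j
    rw [← PBoundAux.ent_star, hBsa.star_eq]
  set g : PBoundAux.E H n := WithLp.toLp 2 (fun i => ContinuousLinearMap.adjoint Y (h i)) with hgdef
  have hBg : ∀ k, (B g) k = ∑ i, PBoundAux.ent B k i (ContinuousLinearMap.adjoint Y (h i)) := by
    intro k
    conv_lhs => rw [← PBoundAux.decomp g]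
    rw [map_sum, PBoundAux.Esum_apply]
    rfl
  -- P is finitely additive on M
  have hP0 : P 0 = 0 := by
    have := hP.map_add 0 (zero_mem M) 0 (zero_mem M)
    rw [add_zero] at this
    exact right_eq_add.mp this
  have hPsum : ∀ (s : Finset (Fin n)) (f : Fin n → (H →L[ℂ] H)), (∀ k, f k ∈ M) →
      P (∑ k ∈ s, f k) = ∑ k ∈ s, P (f k) := by
    intro s f hf
    induction s using Finset.induction with
    | empty => simpa using hP0
    | insert _ _ hk ih =>
      rw [Finset.sum_insert hk, Finset.sum_insert hk,
        hP.map_add _ (hf _) _ (sum_mem fun k _ => hf k), ih]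
  -- rewrite the LHS
  have hLHS : ∑ i, ∑ j, (inner ℂ (ContinuousLinearMap.adjoint Y (h i))
      (a i j (ContinuousLinearMap.adjoint Y (h j))) : ℂ)
      = ((∑ k, ‖(B g) k‖ ^ 2 : ℝ) : ℂ) := by
    have e1 : ∑ i, ∑ j, (inner ℂ (ContinuousLinearMap.adjoint Y (h i))
        (a i j (ContinuousLinearMap.adjoint Y (h j))) : ℂ) = inner ℂ g (A g) := by
      rw [hAdef, PBoundAux.inner_blk]
    have e2 : (inner ℂ g (A g) : ℂ) = inner ℂ (B g) (B g) := by
      rw [← hBB]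
      have h5 : (B * B) g = (ContinuousLinearMap.adjoint B) (B g) := by
        rw [hBsa.adjoint_eq]; rfl
      rw [h5, ContinuousLinearMap.adjoint_inner_right]
    have e3 : (inner ℂ (B g) (B g) : ℂ) = ((‖B g‖ ^ 2 : ℝ) : ℂ) := by
      rw [inner_self_eq_norm_sq_to_K]
      norm_cast
    have e4 : (‖B g‖ ^ 2 : ℝ) = ∑ k, ‖(B g) k‖ ^ 2 := by
      rw [PiLp.norm_sq_eq_of_L2]
    rw [e1, e2, e3, e4]
  rw [hLHS]
  -- apply the P-boundedness condition row by row
  have step : ∀ k : Fin n, ((‖(B g) k‖ ^ 2 : ℝ) : ℂ) ≤ (C : ℂ) * ∑ i, ∑ j,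
      (inner ℂ (h i) (P (star (PBoundAux.ent B k i) * PBoundAux.ent B k j) (h j)) : ℂ) := by
    intro k
    have := hY n (fun i => PBoundAux.ent B k i) (fun i => hBmem k i) h
    rw [hBg k]
    exact this
  have hsum : ((∑ k, ‖(B g) k‖ ^ 2 : ℝ) : ℂ) ≤ ∑ k : Fin n, ((C : ℂ) * ∑ i, ∑ j,
      (inner ℂ (h i) (P (star (PBoundAux.ent B k i) * PBoundAux.ent B k j) (h j)) : ℂ)) := by
    calc ((∑ k, ‖(B g) k‖ ^ 2 : ℝ) : ℂ) = ∑ k, ((‖(B g) k‖ ^ 2 : ℝ) : ℂ) := by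
          push_cast; rfl
      _ ≤ _ := Finset.sum_le_sum fun k _ => step k
  refine hsum.trans (le_of_eq ?_)
  rw [← Finset.mul_sum]
  congr 1
  -- reorganize the sums and use additivity of P
  have hentry : ∀ i j, ∑ k, star (PBoundAux.ent B k i) * PBoundAux.ent B k j = a i j := by
    intro i j
    have : ∑ k, star (PBoundAux.ent B k i) * PBoundAux.ent B k j
        = ∑ k, PBoundAux.ent B i k * PBoundAux.ent B k j := by
      refine Finset.sum_congr rfl fun k _ => ?_
      rw [hBstar k i]
    rw [this, ← PBoundAux.ent_mul, hBB, hAdef, PBoundAux.ent_blk]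
  calc ∑ k : Fin n, ∑ i, ∑ j,
      (inner ℂ (h i) (P (star (PBoundAux.ent B k i) * PBoundAux.ent B k j) (h j)) : ℂ)
      = ∑ i, ∑ j, ∑ k : Fin n,
        (inner ℂ (h i) (P (star (PBoundAux.ent B k i) * PBoundAux.ent B k j) (h j)) : ℂ) := by
        rw [Finset.sum_comm]
        refine Finset.sum_congr rfl fun i _ => Finset.sum_comm
    _ = ∑ i, ∑ j, (inner ℂ (h i) (P (a i j) (h j)) : ℂ) := by
        refine Finset.sum_congr rfl fun i _ => Finset.sum_congr rfl fun j _ => ?_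
        rw [← hentry i j, hPsum Finset.univ _ (fun k => mul_mem (star_mem (hBmem k i)) (hBmem k j)),
          ContinuousLinearMap.sum_apply, inner_sum]
end
end
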